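/- Let G be a block graph in which every block has at least three vertices, and let B be a block of G of size η that shares exactly one vertex with the other blocks of G. Then every zero forcing set of G contains at least η − 2 vertices of B. -/

import Mathlib

namespace ZqForcing

variable {V : Type*}

/-- `u` forces `v` within the allowed vertex set `A`, given the filled set `F`:
`u` is filled, `v` is its unique unfilled neighbor inside `A`. -/
def forceIn (G : SimpleGraph V) (A F : Set V) (u v : V) : Prop :=
  u ∈ A ∧ v ∈ A ∧ u ∈ F ∧ v ∉ F ∧ G.Adj u v ∧
    ∀ w ∈ A, G.Adj u w → w ∉ F → w = v

/-- One step of the standard zero forcing color change rule. -/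
def zfStep (G : SimpleGraph V) (F F' : Set V) : Prop :=
  ∃ u v, forceIn G Set.univ F u v ∧ F' = insert v F

/-- `S` is a zero forcing set: repeated color changes fill all of `V`. -/
def IsZeroForcingSet (G : SimpleGraph V) (S : Set V) : Prop :=
  Relation.ReflTransGen (zfStep G) S Set.univ

/-- The zero forcing number `Z(G)`. -/
noncomputable def zeroForcingNumber (G : SimpleGraph V) : ℕ :=
  sInf {n | ∃ S : Set V, S.ncard = n ∧ IsZeroForcingSet G S}

/-- Reachability in `G - F`, i.e. through vertices avoiding `F`. -/
def reachAvoid (G : SimpleGraph V) (F : Set V) : V → V → Prop :=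
  Relation.ReflTransGen (fun a b => G.Adj a b ∧ a ∉ F ∧ b ∉ F)

/-- The positive semidefinite color change rule: filled `u` forces unfilled `v` when `v`
is the unique neighbor of `u` in the connected component of `G - F` containing `v`. -/
def psdForce (G : SimpleGraph V) (F : Set V) (u v : V) : Prop :=
  u ∈ F ∧ v ∉ F ∧ G.Adj u v ∧
    ∀ w, G.Adj u w → w ∉ F → reachAvoid G F v w → w = v

/-- One step of the positive semidefinite color change rule. -/
def psdStep (G : SimpleGraph V) (F F' : Set V) : Prop :=
  ∃ u v, psdForce G F u v ∧ F' = insert v F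

/-- `S` is a positive semidefinite zero forcing set. -/
def IsPSDForcingSet (G : SimpleGraph V) (S : Set V) : Prop :=
  Relation.ReflTransGen (psdStep G) S Set.univ

/-- The positive semidefinite zero forcing number `Z₊(G)`. -/
noncomputable def psdZeroForcingNumber (G : SimpleGraph V) : ℕ :=
  sInf {n | ∃ S : Set V, S.ncard = n ∧ IsPSDForcingSet G S}

/-- The vertex sets of the connected components of the subgraph induced on
the unfilled vertices. -/
def unfilledComponents (G : SimpleGraph V) (F : Set V) : Set (Set V) :=
  {C | ∃ v, v ∉ F ∧ C = {w | reachAvoid G F v w}}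

/-- A forcing step performed inside the induced subgraph on the vertex set `A`. -/
def rule3Step (G : SimpleGraph V) (A F F' : Set V) : Prop :=
  ∃ u v, forceIn G A F u v ∧ F' = insert v F

/-- `ZqWinFrom G q F t`: starting from the filled set `F`, the player can guarantee to
fill all vertices using at most `t` further tokens against every oracle strategy, in the
`q`-analogue zero forcing game. -/
inductive ZqWinFrom (G : SimpleGraph V) (q : ℕ) : Set V → ℕ → Prop
  | done (t : ℕ) : ZqWinFrom G q Set.univ t
  | rule1 {F : Set V} {t : ℕ} (v : V) (hv : v ∉ F)
      (h : ZqWinFrom G q (insert v F) t) : ZqWinFrom G q F (t + 1)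
  | rule2 {F : Set V} {t : ℕ} (u v : V) (huv : forceIn G Set.univ F u v)
      (h : ZqWinFrom G q (insert v F) t) : ZqWinFrom G q F t
  | rule3 {F : Set V} {t : ℕ} (𝒞 : Set (Set V))
      (h𝒞 : 𝒞 ⊆ unfilledComponents G F) (hcard : q + 1 ≤ 𝒞.ncard)
      (next : ∀ 𝒮 : Set (Set V), 𝒮 ⊆ 𝒞 → 𝒮.Nonempty → Set V)
      (hnext : ∀ (𝒮 : Set (Set V)) (h1 : 𝒮 ⊆ 𝒞) (h2 : 𝒮.Nonempty),
        Relation.ReflTransGen (rule3Step G (F ∪ ⋃₀ 𝒮)) F (next 𝒮 h1 h2))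
      (h : ∀ (𝒮 : Set (Set V)) (h1 : 𝒮 ⊆ 𝒞) (h2 : 𝒮.Nonempty),
        ZqWinFrom G q (next 𝒮 h1 h2) t) :
      ZqWinFrom G q F t

/-- The `q`-analogue zero forcing number `Z_q(G)`. -/
noncomputable def qZeroForcingNumber (G : SimpleGraph V) (q : ℕ) : ℕ :=
  sInf {t | ZqWinFrom G q ∅ t}

/-- The induced subgraph on `B` is connected and has no cut vertex. -/
def NoCutVertex (G : SimpleGraph V) (B : Set V) : Prop :=
  (G.induce B).Connected ∧
    ∀ v ∈ B, (B \ {v}).Nonempty → (G.induce (B \ {v})).Connected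

/-- `B` is a block of `G`: a maximal (vertex set of a) connected subgraph without
a cut vertex. -/
def IsBlock (G : SimpleGraph V) (B : Set V) : Prop :=
  NoCutVertex G B ∧ ∀ B' : Set V, B ⊆ B' → NoCutVertex G B' → B' = B

/-- A block graph: a connected graph each of whose blocks is a clique. -/
def IsBlockGraph (G : SimpleGraph V) : Prop :=
  G.Connected ∧ ∀ B : Set V, IsBlock G B → G.IsClique B

/-- A cactus graph: connected, and every edge lies on at most one cycle
(cycles being identified when they have the same edge set). -/
def IsCactus (G : SimpleGraph V) : Prop :=
  G.Connected ∧ ∀ (a b : V) (c : G.Walk a a) (d : G.Walk b b),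
    c.IsCycle → d.IsCycle → ∀ e ∈ c.edges, e ∈ d.edges →
      ∀ e', e' ∈ c.edges ↔ e' ∈ d.edges

/-- `c` is an induced (chordless) cycle of `G`. -/
def IsInducedCycle (G : SimpleGraph V) {v : V} (c : G.Walk v v) : Prop :=
  c.IsCycle ∧ ∀ x ∈ c.support, ∀ y ∈ c.support, G.Adj x y → s(x, y) ∈ c.edges

/-- Generalized windmill graph of Type I: η disjoint copies of `K_k` together with
`l` central vertices forming a clique, each central vertex adjacent to everything. -/
def windmillI (η k l : ℕ) : SimpleGraph ((Fin η × Fin k) ⊕ Fin l) :=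
  SimpleGraph.fromRel (fun a b =>
    match a, b with
    | Sum.inl (i, _), Sum.inl (i', _) => i = i'
    | Sum.inr _, Sum.inr _ => True
    | _, _ => True)

/-- Generalized windmill graph of Type II: η disjoint copies of `K_k` together with
`l` pairwise nonadjacent central vertices, each adjacent to every clique vertex. -/
def windmillII (η k l : ℕ) : SimpleGraph ((Fin η × Fin k) ⊕ Fin l) :=
  SimpleGraph.fromRel (fun a b =>
    match a, b with
    | Sum.inl (i, _), Sum.inl (i', _) => i = i'
    | Sum.inr _, Sum.inr _ => False
    | _, _ => True)

/-- Generalized star (spider) graph: a center `none` together with `k` disjoint paths,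
the `i`-th of length `m i`, attached to the center at one endpoint. -/
def spider {k : ℕ} (m : Fin k → ℕ) : SimpleGraph (Option (Σ i : Fin k, Fin (m i))) :=
  SimpleGraph.fromRel (fun a b =>
    match a, b with
    | none, some ⟨_, j⟩ => j.val = 0
    | some ⟨i, j⟩, some ⟨i', j'⟩ => i = i' ∧ j.val + 1 = j'.val
    | _, _ => False)



private lemma induce_singleton_connected (G : SimpleGraph V) (y : V) :
    (G.induce {y}).Connected := by
  rw [SimpleGraph.connected_iff]
  refine ⟨?_, ⟨⟨y, rfl⟩⟩⟩
  rintro ⟨a, ha⟩ ⟨b, hb⟩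
  simp only [Set.mem_singleton_iff] at ha hb
  subst ha; subst hb
  exact SimpleGraph.Reachable.refl _

private lemma pair_noCutVertex (G : SimpleGraph V) {w x : V}
    (h : G.Adj w x) : NoCutVertex G {w, x} := by
  constructor
  · rw [SimpleGraph.connected_iff]
    refine ⟨?_, ⟨⟨w, Or.inl rfl⟩⟩⟩
    rintro ⟨a, ha⟩ ⟨b, hb⟩
    simp only [Set.mem_insert_iff, Set.mem_singleton_iff] at ha hb
    have key : ∀ (p : w ∈ ({w, x} : Set V)) (q : x ∈ ({w, x} : Set V)),
        (G.induce {w, x}).Reachable ⟨w, p⟩ ⟨x, q⟩ := by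
      intro p q
      exact SimpleGraph.Adj.reachable h
    rcases ha with rfl | rfl <;> rcases hb with rfl | rfl
    · exact SimpleGraph.Reachable.refl _
    · exact key _ _
    · exact (key _ _).symm
    · exact SimpleGraph.Reachable.refl _
  · intro u hu _
    rcases hu with rfl | hu
    · rw [Set.pair_diff_left h.ne]
      exact induce_singleton_connected G x
    · rw [Set.mem_singleton_iff] at hu; subst hu
      rw [Set.pair_diff_right h.ne]
      exact induce_singleton_connected G w

private lemma exists_block_superset [Fintype V] (G : SimpleGraph V)
    {s : Set V} (hs : NoCutVertex G s) : ∃ B, IsBlock G B ∧ s ⊆ B := by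
  have hfin : {B : Set V | s ⊆ B ∧ NoCutVertex G B}.Finite := Set.toFinite _
  obtain ⟨B, hB, hmax⟩ := Set.Finite.exists_maximalFor Set.ncard _ hfin ⟨s, subset_rfl, hs⟩
  refine ⟨B, ⟨hB.2, ?_⟩, hB.1⟩
  intro B' hsub hB'
  have hB'mem : B' ∈ {B : Set V | s ⊆ B ∧ NoCutVertex G B} := ⟨hB.1.trans hsub, hB'⟩
  have hle : B.ncard ≤ B'.ncard := Set.ncard_le_ncard hsub (Set.toFinite _)
  have heq := hmax hB'mem hle
  exact (Set.eq_of_subset_of_ncard_le hsub heq (Set.toFinite _)).symm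

/-- in a block graph all of whose blocks have at least three vertices,
if `B` is a block of size `η` sharing exactly one vertex `v` with the other blocks,
then every zero forcing set contains at least `η - 2` vertices of `B`. -/
theorem stmt1 {V : Type*} [Fintype V] (G : SimpleGraph V)
    (hG : IsBlockGraph G) (hbig : ∀ B : Set V, IsBlock G B → 3 ≤ B.ncard)
    (B : Set V) (hB : IsBlock G B) (η : ℕ) (hη : B.ncard = η)
    (v : V) (hv : v ∈ B)
    (hshared : ∀ w ∈ B, ((∃ B' : Set V, IsBlock G B' ∧ B' ≠ B ∧ w ∈ B') ↔ w = v))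
    (S : Set V) (hS : IsZeroForcingSet G S) :
    η - 2 ≤ (S ∩ B).ncard := by
  subst hη
  have hclique := hG.2 B hB
  have hη3 := hbig B hB
  by_contra hlt
  push_neg at hlt
  have hnbr : ∀ w ∈ B, w ≠ v → ∀ x, G.Adj w x → x ∈ B := by
    intro w hw hwv x hadj
    by_contra hx
    obtain ⟨B', hB', hsub⟩ := exists_block_superset G (pair_noCutVertex G hadj)
    have hne : B' ≠ B := fun h => hx (h ▸ hsub (Or.inr rfl))
    exact hwv ((hshared w hw).mp ⟨B', hB', hne, hsub (Or.inl rfl)⟩)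
  have hBS : B \ S = B \ (S ∩ B) := by ext y; simp only [Set.mem_diff, Set.mem_inter_iff]; tauto
  have h1 : (B \ S).ncard = B.ncard - (S ∩ B).ncard := by
    rw [hBS, Set.ncard_diff Set.inter_subset_right]
  have h2 : 3 ≤ (B \ S).ncard := by omega
  have h3 : (B \ S) \ {v} = (B \ {v}) \ S := by
    ext y; simp only [Set.mem_diff, Set.mem_singleton_iff]; tauto
  have h5 : B \ S ⊆ insert v ((B \ S) \ {v}) := by
    intro y hy
    by_cases h : y = v
    · exact Or.inl h
    · exact Or.inr ⟨hy, h⟩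
  have h6 := (Set.ncard_le_ncard h5 (Set.toFinite _)).trans (Set.ncard_insert_le v _)
  rw [h3] at h6
  have h4 : 2 ≤ ((B \ {v}) \ S).ncard := by omega
  have key : ∀ F, Relation.ReflTransGen (zfStep G) S F → 2 ≤ ((B \ {v}) \ F).ncard := by
    intro F hF
    induction hF with
    | refl => exact h4
    | @tail F F' _ hstep ih =>
      obtain ⟨u, z, hforce, rfl⟩ := hstep
      by_cases hz : z ∈ B \ {v}
      · exfalso
        obtain ⟨-, -, huF, hzF, hadj, huniq⟩ := hforce
        have hu : u ∈ B := hnbr z hz.1 hz.2 u hadj.symm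
        obtain ⟨a, b, ha, hb, hab⟩ := (Set.one_lt_ncard_iff (Set.toFinite _)).mp
          (by omega : 1 < ((B \ {v}) \ F).ncard)
        have hau : a ≠ u := fun h => ha.2 (h ▸ huF)
        have hbu : b ≠ u := fun h => hb.2 (h ▸ huF)
        have ha' := huniq a (Set.mem_univ a) (hclique hu ha.1.1 hau.symm) ha.2
        have hb' := huniq b (Set.mem_univ b) (hclique hu hb.1.1 hbu.symm) hb.2
        exact hab (ha'.trans hb'.symm)
      · have heq : (B \ {v}) \ insert z F = (B \ {v}) \ F := by
          ext y
          simp only [Set.mem_diff, Set.mem_insert_iff, Set.mem_singleton_iff,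
            not_or] at *
          constructor
          · rintro ⟨h1, h2, h3⟩; exact ⟨h1, h3⟩
          · rintro ⟨⟨h1, h1'⟩, h2⟩
            refine ⟨⟨h1, h1'⟩, fun h => ?_, h2⟩
            subst h
            exact hz ⟨h1, h1'⟩
        rw [heq]; exact ih
  have hfin := key Set.univ hS
  rw [Set.diff_univ, Set.ncard_empty] at hfin
  omega

end ZqForcing
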